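/- Let E ⊆ ℝ^N × ℝ be a closed set and for t ∈ ℝ set E(t) := {x ∈ ℝ^N : (x,t) ∈ E}. Then the function (x,t) ↦ dist_{φ°}(x, E(t)), with values in [0, +∞] (equal to +∞ when E(t) = ∅), is lower semicontinuous on ℝ^N × ℝ. -/

import Mathlib

open MeasureTheory Set Filter Topology
open scoped RealInnerProductSpace ENNReal

noncomputable section

/-- An anisotropy (norm) on `ℝ^N`: convex, even, positively 1-homogeneous and
positive away from the origin. -/
structure IsAnisoNorm {N : ℕ} (φ : EuclideanSpace ℝ (Fin N) → ℝ) : Prop where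
  convexOn : ConvexOn ℝ Set.univ φ
  even : ∀ x, φ (-x) = φ x
  homog : ∀ (c : ℝ) (x : EuclideanSpace ℝ (Fin N)), 0 ≤ c → φ (c • x) = c * φ x
  pos : ∀ x : EuclideanSpace ℝ (Fin N), x ≠ 0 → 0 < φ x

/-- The polar norm `φ°(ξ) = sup {ξ·η : φ(η) ≤ 1}`. -/
noncomputable def polar {N : ℕ} (φ : EuclideanSpace ℝ (Fin N) → ℝ)
    (ξ : EuclideanSpace ℝ (Fin N)) : ℝ :=
  sSup ((fun η => ⟪ξ, η⟫) '' {η : EuclideanSpace ℝ (Fin N) | φ η ≤ 1})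

/-- The subdifferential `∂φ(p) = {v : ∀ q, φ(q) ≥ φ(p) + v·(q-p)}`. -/
def subdiff {N : ℕ} (φ : EuclideanSpace ℝ (Fin N) → ℝ) (p : EuclideanSpace ℝ (Fin N)) :
    Set (EuclideanSpace ℝ (Fin N)) :=
  {v | ∀ q, φ p + ⟪v, q - p⟫ ≤ φ q}


/-- Distance induced by the polar norm `φ°` from a point to a set, with value `∞`
for the empty set. -/
noncomputable def edistP {N : ℕ} (φ : EuclideanSpace ℝ (Fin N) → ℝ)
    (x : EuclideanSpace ℝ (Fin N)) (F : Set (EuclideanSpace ℝ (Fin N))) : ℝ≥0∞ :=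
  ⨅ y ∈ F, ENNReal.ofReal (polar φ (x - y))

/-- The time-`t` slice of a space-time set. -/
def timeSlice {N : ℕ} (E : Set (EuclideanSpace ℝ (Fin N) × ℝ)) (t : ℝ) :
    Set (EuclideanSpace ℝ (Fin N)) := {x | (x, t) ∈ E}

variable {N : ℕ} {φ : EuclideanSpace ℝ (Fin N) → ℝ}

lemma aniso_zero (hφ : IsAnisoNorm φ) : φ 0 = 0 := by
  have := hφ.homog 0 0 le_rfl
  simpa using this

lemma aniso_nonneg (hφ : IsAnisoNorm φ) (x) : 0 ≤ φ x := by
  have h := hφ.convexOn.2 (mem_univ x) (mem_univ (-x)) (le_of_lt one_half_pos)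
    (le_of_lt one_half_pos) (by norm_num)
  have hx : (1/2 : ℝ) • x + (1/2 : ℝ) • (-x) = 0 := by
    simp [smul_neg]
  rw [hx, aniso_zero hφ, hφ.even] at h
  simp only [smul_eq_mul] at h
  linarith

lemma aniso_add (hφ : IsAnisoNorm φ) (x y) : φ (x + y) ≤ φ x + φ y := by
  have h := hφ.convexOn.2 (mem_univ x) (mem_univ y) (le_of_lt one_half_pos)
    (le_of_lt one_half_pos) (by norm_num)
  have hx : (1/2 : ℝ) • x + (1/2 : ℝ) • y = (1/2 : ℝ) • (x + y) := by
    rw [smul_add]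
  rw [hx, hφ.homog _ _ (by norm_num)] at h
  simp only [smul_eq_mul] at h
  linarith

lemma aniso_smul (hφ : IsAnisoNorm φ) (c : ℝ) (x) : φ (c • x) = |c| * φ x := by
  rcases le_or_gt 0 c with h | h
  · rw [hφ.homog c x h, abs_of_nonneg h]
  · have : φ (c • x) = φ (-((-c) • x)) := by rw [neg_smul, neg_neg]
    rw [this, hφ.even, hφ.homog (-c) x (by linarith), abs_of_neg h]

lemma aniso_sumle (hφ : IsAnisoNorm φ) {ι : Type*} (s : Finset ι)
    (f : ι → EuclideanSpace ℝ (Fin N)) :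
    φ (∑ i ∈ s, f i) ≤ ∑ i ∈ s, φ (f i) := by
  classical
  induction s using Finset.induction with
  | empty => simp [aniso_zero hφ]
  | @insert _ _ h ih =>
    rw [Finset.sum_insert h, Finset.sum_insert h]
    exact le_trans (aniso_add hφ _ _) (by linarith)

lemma euclid_repr (x : EuclideanSpace ℝ (Fin N)) :
    x = ∑ i, x i • EuclideanSpace.single i (1:ℝ) := by
  ext j
  have : (∑ i, x i • EuclideanSpace.single i (1:ℝ)) j
      = ∑ i, (x i • EuclideanSpace.single i (1:ℝ)) j := by
    rw [WithLp.ofLp_sum]; exact Finset.sum_apply j Finset.univ _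
  rw [this]
  simp [EuclideanSpace.single_apply]

lemma aniso_upper (hφ : IsAnisoNorm φ) :
    ∃ M > 0, ∀ x, φ x ≤ M * ‖x‖ := by
  have hnn : ∀ i : Fin N, 0 ≤ φ (EuclideanSpace.single i (1:ℝ)) :=
    fun i => aniso_nonneg hφ _
  refine ⟨1 + ∑ i, φ (EuclideanSpace.single i (1:ℝ)),
    by
      have := Finset.sum_nonneg (s := Finset.univ) fun i _ => hnn i
      linarith, ?_⟩
  intro x
  calc φ x = φ (∑ i, x i • EuclideanSpace.single i (1:ℝ)) := by rw [← euclid_repr]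
    _ ≤ ∑ i, φ (x i • EuclideanSpace.single i (1:ℝ)) := aniso_sumle hφ _ _
    _ = ∑ i, |x i| * φ (EuclideanSpace.single i (1:ℝ)) := by
        simp only [aniso_smul hφ]
    _ ≤ ∑ i, ‖x‖ * φ (EuclideanSpace.single i (1:ℝ)) := by
        refine Finset.sum_le_sum fun i _ => ?_
        have hx : |x i| ≤ ‖x‖ := by
          have h1 : ⟪EuclideanSpace.single i (1:ℝ), x⟫ = x i := by
            simp [EuclideanSpace.inner_single_left]
          calc |x i| = |⟪EuclideanSpace.single i (1:ℝ), x⟫| := by rw [h1]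
            _ ≤ ‖EuclideanSpace.single i (1:ℝ)‖ * ‖x‖ := abs_real_inner_le_norm _ _
            _ = ‖x‖ := by rw [EuclideanSpace.norm_single]; simp
        exact mul_le_mul_of_nonneg_right hx (hnn i)
    _ = (∑ i, φ (EuclideanSpace.single i (1:ℝ))) * ‖x‖ := by
        rw [Finset.sum_mul]
        exact Finset.sum_congr rfl fun i _ => mul_comm _ _
    _ ≤ (1 + ∑ i, φ (EuclideanSpace.single i (1:ℝ))) * ‖x‖ := by
        have : (0:ℝ) ≤ ‖x‖ := norm_nonneg x
        nlinarith [Finset.sum_nonneg (fun i (_ : i ∈ Finset.univ) => hnn i)]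

lemma aniso_lip (hφ : IsAnisoNorm φ) (x y : EuclideanSpace ℝ (Fin N)) :
    |φ x - φ y| ≤ φ (x - y) := by
  rw [abs_sub_le_iff]
  constructor
  · have := aniso_add hφ (x - y) y
    simp only [sub_add_cancel] at this
    linarith
  · have := aniso_add hφ (y - x) x
    simp only [sub_add_cancel] at this
    have he : φ (y - x) = φ (x - y) := by
      rw [← hφ.even (y - x)]; congr 1; abel
    linarith [he ▸ this]

lemma aniso_continuous (hφ : IsAnisoNorm φ) : Continuous φ := by
  obtain ⟨M, hM, hub⟩ := aniso_upper hφ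
  have : LipschitzWith (Real.toNNReal M) φ := by
    refine LipschitzWith.of_dist_le_mul fun x y => ?_
    have h1 : dist (φ x) (φ y) = |φ x - φ y| := Real.dist_eq _ _
    rw [h1, Real.coe_toNNReal _ hM.le]
    calc |φ x - φ y| ≤ φ (x - y) := aniso_lip hφ x y
      _ ≤ M * ‖x - y‖ := hub _
      _ = M * dist x y := by rw [dist_eq_norm]
  exact this.continuous

lemma aniso_lower (hφ : IsAnisoNorm φ) (hN : 0 < N) :
    ∃ m > 0, ∀ x, m * ‖x‖ ≤ φ x := by
  haveI : Nonempty (Fin N) := ⟨⟨0, hN⟩⟩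
  have hsne : (Metric.sphere (0 : EuclideanSpace ℝ (Fin N)) 1).Nonempty :=
    NormedSpace.sphere_nonempty.mpr zero_le_one
  obtain ⟨z, hz, hmin⟩ := (isCompact_sphere (0 : EuclideanSpace ℝ (Fin N)) 1).exists_isMinOn
    hsne (aniso_continuous hφ).continuousOn
  have hz1 : ‖z‖ = 1 := by simpa using mem_sphere_zero_iff_norm.mp hz
  have hzne : z ≠ 0 := by intro h; rw [h] at hz1; simp at hz1
  refine ⟨φ z, hφ.pos z hzne, fun x => ?_⟩
  rcases eq_or_ne x 0 with rfl | hx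
  · simp [aniso_zero hφ]
  · have hnx : (0:ℝ) < ‖x‖ := norm_pos_iff.mpr hx
    have hu : (‖x‖⁻¹ • x) ∈ Metric.sphere (0 : EuclideanSpace ℝ (Fin N)) 1 := by
      rw [mem_sphere_zero_iff_norm, norm_smul, norm_inv, norm_norm,
        inv_mul_cancel₀ hnx.ne']
    have h1 : φ z ≤ φ (‖x‖⁻¹ • x) := hmin hu
    have h2 : φ (‖x‖⁻¹ • x) = ‖x‖⁻¹ * φ x := hφ.homog _ _ (by positivity)
    rw [h2] at h1
    calc φ z * ‖x‖ ≤ (‖x‖⁻¹ * φ x) * ‖x‖ := by nlinarith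
      _ = φ x := by field_simp

lemma polar_bdd {m : ℝ} (hm0 : 0 < m) (hm : ∀ x, m * ‖x‖ ≤ φ x)
    (ξ : EuclideanSpace ℝ (Fin N)) :
    BddAbove ((fun η => ⟪ξ, η⟫) '' {η : EuclideanSpace ℝ (Fin N) | φ η ≤ 1}) := by
  refine ⟨m⁻¹ * ‖ξ‖, ?_⟩
  rintro _ ⟨η, hη, rfl⟩
  have h1 : ‖η‖ ≤ m⁻¹ := by
    rw [← one_div, le_div_iff₀ hm0]
    calc ‖η‖ * m = m * ‖η‖ := mul_comm _ _
      _ ≤ φ η := hm η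
      _ ≤ 1 := hη
  show (⟪ξ, η⟫:ℝ) ≤ m⁻¹ * ‖ξ‖
  calc (⟪ξ, η⟫:ℝ) ≤ ‖ξ‖ * ‖η‖ := real_inner_le_norm _ _
    _ ≤ ‖ξ‖ * m⁻¹ := by nlinarith [norm_nonneg ξ]
    _ = m⁻¹ * ‖ξ‖ := mul_comm _ _

lemma polar_zero_mem (hφ : IsAnisoNorm φ) (ξ : EuclideanSpace ℝ (Fin N)) :
    (0:ℝ) ∈ ((fun η => ⟪ξ, η⟫) '' {η : EuclideanSpace ℝ (Fin N) | φ η ≤ 1}) :=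
  ⟨0, by simp [aniso_zero hφ], by simp⟩

lemma polar_nonneg (hφ : IsAnisoNorm φ) {m : ℝ} (hm0 : 0 < m) (hm : ∀ x, m * ‖x‖ ≤ φ x)
    (ξ : EuclideanSpace ℝ (Fin N)) : 0 ≤ polar φ ξ :=
  le_csSup (polar_bdd hm0 hm ξ) (polar_zero_mem hφ ξ)

lemma le_polar {m : ℝ} (hm0 : 0 < m) (hm : ∀ x, m * ‖x‖ ≤ φ x)
    (ξ η : EuclideanSpace ℝ (Fin N)) (hη : φ η ≤ 1) : ⟪ξ, η⟫ ≤ polar φ ξ :=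
  le_csSup (polar_bdd hm0 hm ξ) ⟨η, hη, rfl⟩

lemma polar_le (hφ : IsAnisoNorm φ) {m : ℝ} (hm0 : 0 < m) (hm : ∀ x, m * ‖x‖ ≤ φ x)
    (ξ : EuclideanSpace ℝ (Fin N)) : polar φ ξ ≤ m⁻¹ * ‖ξ‖ := by
  refine csSup_le ⟨0, polar_zero_mem hφ ξ⟩ ?_
  rintro _ ⟨η, hη, rfl⟩
  have h1 : ‖η‖ ≤ m⁻¹ := by
    rw [← one_div, le_div_iff₀ hm0]
    calc ‖η‖ * m = m * ‖η‖ := mul_comm _ _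
      _ ≤ φ η := hm η
      _ ≤ 1 := hη
  calc ⟪ξ, η⟫ ≤ ‖ξ‖ * ‖η‖ := real_inner_le_norm _ _
    _ ≤ ‖ξ‖ * m⁻¹ := by nlinarith [norm_nonneg ξ]
    _ = m⁻¹ * ‖ξ‖ := mul_comm _ _

lemma polar_add (hφ : IsAnisoNorm φ) {m : ℝ} (hm0 : 0 < m) (hm : ∀ x, m * ‖x‖ ≤ φ x)
    (a b : EuclideanSpace ℝ (Fin N)) :
    polar φ (a + b) ≤ polar φ a + polar φ b := by
  refine csSup_le ⟨0, polar_zero_mem hφ _⟩ ?_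
  rintro _ ⟨η, hη, rfl⟩
  show (⟪a + b, η⟫:ℝ) ≤ _
  rw [inner_add_left]
  exact add_le_add (le_polar hm0 hm a η hη) (le_polar hm0 hm b η hη)

lemma norm_le_polar (hφ : IsAnisoNorm φ) {M : ℝ} (hM0 : 0 < M) (hM : ∀ x, φ x ≤ M * ‖x‖)
    {m : ℝ} (hm0 : 0 < m) (hm : ∀ x, m * ‖x‖ ≤ φ x)
    (ξ : EuclideanSpace ℝ (Fin N)) : ‖ξ‖ ≤ M * polar φ ξ := by
  rcases eq_or_ne ξ 0 with rfl | hξ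
  · simpa using mul_nonneg hM0.le (polar_nonneg hφ hm0 hm 0)
  · have hp : 0 < φ ξ := hφ.pos ξ hξ
    have hη : φ ((φ ξ)⁻¹ • ξ) ≤ 1 := by
      rw [hφ.homog _ _ (by positivity), inv_mul_cancel₀ hp.ne']
    have h1 : ⟪ξ, (φ ξ)⁻¹ • ξ⟫ ≤ polar φ ξ := le_polar hm0 hm _ _ hη
    have h2 : ⟪ξ, (φ ξ)⁻¹ • ξ⟫ = (φ ξ)⁻¹ * ‖ξ‖^2 := by
      rw [real_inner_smul_right, real_inner_self_eq_norm_sq]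
    have h3 : φ ξ ≤ M * ‖ξ‖ := hM ξ
    have hnx : (0:ℝ) < ‖ξ‖ := norm_pos_iff.mpr hξ
    rw [h2] at h1
    have h4 : (M * ‖ξ‖)⁻¹ * ‖ξ‖^2 ≤ (φ ξ)⁻¹ * ‖ξ‖^2 := by
      gcongr
    have h5 : (M * ‖ξ‖)⁻¹ * ‖ξ‖^2 = ‖ξ‖ / M := by
      field_simp
    have h6 : ‖ξ‖ / M ≤ polar φ ξ := by linarith
    rw [div_le_iff₀ hM0] at h6
    linarith

lemma polar_lip (hφ : IsAnisoNorm φ) {m : ℝ} (hm0 : 0 < m) (hm : ∀ x, m * ‖x‖ ≤ φ x)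
    (a b : EuclideanSpace ℝ (Fin N)) :
    |polar φ a - polar φ b| ≤ m⁻¹ * ‖a - b‖ := by
  have key : ∀ u v : EuclideanSpace ℝ (Fin N),
      polar φ u - polar φ v ≤ m⁻¹ * ‖u - v‖ := by
    intro u v
    have h1 := polar_add hφ hm0 hm (u - v) v
    rw [sub_add_cancel] at h1
    have h2 := polar_le hφ hm0 hm (u - v)
    linarith
  rw [abs_sub_le_iff]
  refine ⟨key a b, ?_⟩
  have := key b a
  rwa [norm_sub_rev] at this

lemma polar_continuous (hφ : IsAnisoNorm φ) {m : ℝ} (hm0 : 0 < m)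
    (hm : ∀ x, m * ‖x‖ ≤ φ x) : Continuous (polar φ) := by
  have : LipschitzWith (Real.toNNReal m⁻¹) (polar φ) := by
    refine LipschitzWith.of_dist_le_mul fun x y => ?_
    rw [Real.dist_eq, Real.coe_toNNReal _ (by positivity), dist_eq_norm]
    exact polar_lip hφ hm0 hm x y
  exact this.continuous


/-- For a closed space-time set `E`, the function `(x,t) ↦ dist_{φ°}(x, E(t))` with
values in `[0,∞]` is lower semicontinuous. -/
theorem statement16 {N : ℕ} (hN : 0 < N) (φ : EuclideanSpace ℝ (Fin N) → ℝ)
    (hφ : IsAnisoNorm φ) (E : Set (EuclideanSpace ℝ (Fin N) × ℝ)) (hE : IsClosed E) :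
    LowerSemicontinuous fun p : EuclideanSpace ℝ (Fin N) × ℝ =>
      edistP φ p.1 (timeSlice E p.2) := by
  obtain ⟨M, hM0, hM⟩ := aniso_upper hφ
  obtain ⟨m, hm0, hm⟩ := aniso_lower hφ hN
  intro p c hc
  obtain ⟨r, hr0, hcr, hrf⟩ := ENNReal.lt_iff_exists_real_btwn.mp hc
  have hrpos : 0 < r := by
    rcases hr0.lt_or_eq with h | h
    · exact h
    · exfalso; rw [← h] at hcr; simp at hcr
  by_contra hcon
  rw [Filter.not_eventually] at hcon
  obtain ⟨u, hut, hu⟩ := Filter.exists_seq_forall_of_frequently hcon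
  -- hu n : ¬ c < edistP φ (u n).1 (timeSlice E (u n).2)
  have hyn : ∀ n, ∃ y ∈ timeSlice E (u n).2, polar φ ((u n).1 - y) < r := by
    intro n
    have h1 : edistP φ (u n).1 (timeSlice E (u n).2) < ENNReal.ofReal r :=
      lt_of_le_of_lt (not_lt.mp (hu n)) hcr
    rw [edistP] at h1
    obtain ⟨y, hy⟩ := iInf_lt_iff.mp h1
    obtain ⟨hyF, hylt⟩ := iInf_lt_iff.mp hy
    exact ⟨y, hyF, (ENNReal.ofReal_lt_ofReal_iff hrpos).mp hylt⟩
  choose y hyF hylt using hyn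
  have hx1 : Tendsto (fun n => (u n).1) atTop (𝓝 p.1) := (continuous_fst.tendsto p).comp hut
  have hx2 : Tendsto (fun n => (u n).2) atTop (𝓝 p.2) := (continuous_snd.tendsto p).comp hut
  have hxb : Bornology.IsBounded (Set.range fun n => (u n).1) :=
    Metric.isBounded_range_of_tendsto _ hx1
  obtain ⟨R, hR⟩ := hxb.subset_closedBall 0
  have hyb : ∀ n, y n ∈ Metric.closedBall (0 : EuclideanSpace ℝ (Fin N)) (R + M * r) := by
    intro n
    have h1 : ‖(u n).1 - y n‖ ≤ M * polar φ ((u n).1 - y n) :=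
      norm_le_polar hφ hM0 hM hm0 hm _
    have h2 : M * polar φ ((u n).1 - y n) ≤ M * r :=
      mul_le_mul_of_nonneg_left (hylt n).le hM0.le
    have h3 : ‖(u n).1‖ ≤ R := by
      simpa using hR (Set.mem_range_self n)
    rw [Metric.mem_closedBall, dist_zero_right]
    calc ‖y n‖ = ‖(u n).1 - ((u n).1 - y n)‖ := by congr 1; abel
      _ ≤ ‖(u n).1‖ + ‖(u n).1 - y n‖ := norm_sub_le _ _
      _ ≤ R + M * r := by linarith
  obtain ⟨a, -, g, hg, hga⟩ := tendsto_subseq_of_bounded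
    (Metric.isBounded_closedBall (x := (0 : EuclideanSpace ℝ (Fin N))) (r := R + M * r)) hyb
  have haE : a ∈ timeSlice E p.2 := by
    have htend : Tendsto (fun n => (y (g n), (u (g n)).2)) atTop (𝓝 (a, p.2)) :=
      Tendsto.prodMk_nhds hga (hx2.comp hg.tendsto_atTop)
    exact hE.mem_of_tendsto htend (Filter.Eventually.of_forall fun n => hyF (g n))
  have hpol : Tendsto (fun n => polar φ ((u (g n)).1 - y (g n))) atTop
      (𝓝 (polar φ (p.1 - a))) := by
    have hsub : Tendsto (fun n => (u (g n)).1 - y (g n)) atTop (𝓝 (p.1 - a)) :=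
      Tendsto.sub (hx1.comp hg.tendsto_atTop) hga
    exact ((polar_continuous hφ hm0 hm).continuousAt.tendsto).comp hsub
  have hle : polar φ (p.1 - a) ≤ r :=
    le_of_tendsto hpol (Filter.Eventually.of_forall fun n => (hylt (g n)).le)
  have hfinal : edistP φ p.1 (timeSlice E p.2) ≤ ENNReal.ofReal r := by
    refine le_trans (iInf₂_le a haE) ?_
    exact ENNReal.ofReal_le_ofReal hle
  exact absurd (lt_of_lt_of_le hrf hfinal) (lt_irrefl _)
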